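/- Let λ > 1, let A be an n × n matrix all of whose entries lie in [λ⁻¹, λ], and let s be the sum of all entries of A. Then for all indices i, j ∈ {1,…,n}: λ⁻⁵·n⁻¹·per(A) ≤ λ⁻⁴·n·s⁻¹·per(A) ≤ per(A(i|j)) ≤ λ⁴·n·s⁻¹·per(A) ≤ λ⁵·n⁻¹·per(A), where A(i|j) denotes the (n−1) × (n−1) matrix obtained from A by deleting the i-th row and the j-th column. -/

import Mathlib

open scoped BigOperators Kronecker
open Matrix

/-- The permanent of a square real matrix. -/
noncomputable def perm {ι : Type*} [Fintype ι] [DecidableEq ι] (A : Matrix ι ι ℝ) : ℝ :=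
  ∑ σ : Equiv.Perm ι, ∏ i, A i (σ i)

/-- The permanental mean `pm A = (per A / n!) ^ (1/n)`. -/
noncomputable def pm {ι : Type*} [Fintype ι] [DecidableEq ι] (A : Matrix ι ι ℝ) : ℝ :=
  (perm A / (Nat.factorial (Fintype.card ι) : ℝ)) ^ ((Fintype.card ι : ℝ)⁻¹)

/-- The geometric mean of the entries of a vector. -/
noncomputable def gmVec {ι : Type*} [Fintype ι] (v : ι → ℝ) : ℝ :=
  (∏ i, v i) ^ ((Fintype.card ι : ℝ)⁻¹)

/-- The set of values whose infimum defines the scaling mean. -/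
noncomputable def smSet {ι κ : Type*} [Fintype ι] [Fintype κ] (A : Matrix ι κ ℝ) : Set ℝ :=
  {r : ℝ | ∃ x : ι → ℝ, ∃ y : κ → ℝ, (∀ i, 0 < x i) ∧ (∀ j, 0 < y j) ∧
    r = (∑ i, ∑ j, x i * A i j * y j) / (gmVec x * gmVec y)}

/-- The scaling mean `sm A = (1/(mn)) · inf over positive vectors x, y of xᵀAy/(gm x · gm y)`. -/
noncomputable def sm {ι κ : Type*} [Fintype ι] [Fintype κ] (A : Matrix ι κ ℝ) : ℝ :=
  ((Fintype.card ι : ℝ) * (Fintype.card κ : ℝ))⁻¹ * sInf (smSet A)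

/-- Reindexing: if `g` and `h` are injections with the same range, the permanent-like sums agree. -/
lemma sum_prod_comp_eq {n m : ℕ} (C : Fin n → Fin m → ℝ) (g h : Fin n → Fin m)
    (hg : Function.Injective g) (hr : Set.range g = Set.range h) :
    ∑ τ : Equiv.Perm (Fin n), ∏ k, C k (g (τ k)) =
    ∑ τ : Equiv.Perm (Fin n), ∏ k, C k (h (τ k)) := by
  have hu : ∀ k, ∃ s, h s = g k := by
    intro k
    have : g k ∈ Set.range h := hr ▸ Set.mem_range_self k
    exact this
  choose u hu' using hu
  have huinj : Function.Injective u := fun a b hab => hg (by rw [← hu' a, ← hu' b, hab])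
  let π : Equiv.Perm (Fin n) := Equiv.ofBijective u (Finite.injective_iff_bijective.mp huinj)
  refine Fintype.sum_bijective (fun τ => π * τ) ((Group.mulLeft_bijective π)) _ _ ?_
  intro τ
  refine Finset.prod_congr rfl fun k _ => ?_
  have : h (π (τ k)) = g (τ k) := hu' (τ k)
  simp only [Equiv.Perm.mul_apply]
  rw [this]

/-- Expansion of the permanent along row `i`. -/
lemma perm_expand {N : ℕ} (A : Matrix (Fin (N+1)) (Fin (N+1)) ℝ) (i : Fin (N+1)) :
    perm A = ∑ j, A i j * perm (A.submatrix i.succAbove j.succAbove) := by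
  classical
  have key : ∀ j : Fin (N+1),
      A i j * perm (A.submatrix i.succAbove j.succAbove)
        = ∑ σ ∈ Finset.univ.filter (fun σ : Equiv.Perm (Fin (N+1)) => σ i = j),
            ∏ k, A k (σ k) := by
    intro j
    unfold perm
    rw [Finset.mul_sum]
    refine Finset.sum_bij
      (fun τ _ => (finSuccEquiv' i).trans ((Equiv.optionCongr τ).trans (finSuccEquiv' j).symm))
      ?_ ?_ ?_ ?_
    · intro τ _
      simp [Finset.mem_filter]
    · intro τ1 _ τ2 _ hτ
      refine Equiv.ext fun k => ?_
      have h1 := congrArg (fun (σ : Equiv.Perm (Fin (N+1))) => σ (i.succAbove k)) hτ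
      simp only [Equiv.trans_apply, finSuccEquiv'_succAbove, Equiv.optionCongr_apply,
        Option.map_some, finSuccEquiv'_symm_some] at h1
      exact Fin.succAbove_right_injective h1
    · intro σ hσ
      have hσi : σ i = j := (Finset.mem_filter.mp hσ).2
      have hne : ∀ k, σ (i.succAbove k) ≠ j := by
        intro k h
        exact Fin.succAbove_ne i k (σ.injective (h.trans hσi.symm))
      have hex : ∀ k, ∃ s, j.succAbove s = σ (i.succAbove k) := fun k =>
        Fin.exists_succAbove_eq (hne k)
      choose u hu using hex
      have huinj : Function.Injective u := by
        intro a b hab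
        have : σ (i.succAbove a) = σ (i.succAbove b) := by rw [← hu a, ← hu b, hab]
        exact Fin.succAbove_right_injective (σ.injective this)
      refine ⟨Equiv.ofBijective u (Finite.injective_iff_bijective.mp huinj),
        Finset.mem_univ _, ?_⟩
      refine Equiv.ext fun x => ?_
      rcases eq_or_ne x i with rfl | hx
      · simp [hσi]
      · obtain ⟨k, rfl⟩ := Fin.exists_succAbove_eq hx
        simpa [Equiv.ofBijective_apply] using hu k
    · intro τ _
      rw [Fin.prod_univ_succAbove (fun k => A k
        (((finSuccEquiv' i).trans ((Equiv.optionCongr τ).trans (finSuccEquiv' j).symm)) k)) i]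
      congr 1
      · simp
      · refine Finset.prod_congr rfl fun k _ => ?_
        simp [Matrix.submatrix_apply]
  rw [perm]
  rw [← Finset.sum_fiberwise Finset.univ (fun σ : Equiv.Perm (Fin (N+1)) => σ i)
    (fun σ => ∏ k, A k (σ k))]
  exact Finset.sum_congr rfl fun j _ => (key j).symm

lemma perm_transpose {n : ℕ} (A : Matrix (Fin n) (Fin n) ℝ) : perm Aᵀ = perm A := by
  unfold perm
  refine Fintype.sum_bijective (fun σ : Equiv.Perm (Fin n) => σ⁻¹)
    (Equiv.inv (Equiv.Perm (Fin n))).bijective _ _ ?_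
  intro σ
  have := Equiv.prod_comp σ (fun k => A k (σ⁻¹ k))
  rw [← this]
  refine Finset.prod_congr rfl fun k _ => ?_
  simp [Matrix.transpose_apply]

/-- Column comparison: changing the deleted column costs at most `lam ^ 2`. -/
lemma sumprod_col_le {N : ℕ} (lam : ℝ) (hlam : 1 < lam)
    (M : Matrix (Fin N) (Fin (N+1)) ℝ) (hM : ∀ k q, lam⁻¹ ≤ M k q ∧ M k q ≤ lam)
    (j j' : Fin (N+1)) :
    ∑ τ : Equiv.Perm (Fin N), ∏ k, M k (j.succAbove (τ k)) ≤
    lam ^ 2 * ∑ τ : Equiv.Perm (Fin N), ∏ k, M k (j'.succAbove (τ k)) := by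
  have lam0 : (0:ℝ) < lam := lt_trans one_pos hlam
  have hpos : ∀ k q, 0 < M k q := fun k q => lt_of_lt_of_le (inv_pos.mpr lam0) (hM k q).1
  have hprodpos : ∀ (g : Fin N → Fin (N+1)) (τ : Equiv.Perm (Fin N)),
      0 < ∏ k, M k (g (τ k)) := fun g τ => Finset.prod_pos fun k _ => hpos _ _
  rcases eq_or_ne j j' with rfl | hne
  · have h1 : (0:ℝ) ≤ ∑ τ : Equiv.Perm (Fin N), ∏ k, M k (j.succAbove (τ k)) :=
      Finset.sum_nonneg fun τ _ => (hprodpos _ τ).le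
    have h2 : (1:ℝ) ≤ lam ^ 2 := by nlinarith
    nlinarith [mul_le_mul_of_nonneg_right h2 h1]
  · set c := Equiv.swap j j' with hc
    have hstep : ∀ τ : Equiv.Perm (Fin N),
        ∏ k, M k (j.succAbove (τ k)) ≤ lam ^ 2 * ∏ k, M k (c (j.succAbove (τ k))) := by
      intro τ
      obtain ⟨m, hm⟩ := Fin.exists_succAbove_eq hne.symm
      set k0 := τ.symm m with hk0
      have hτk0 : τ k0 = m := τ.apply_symm_apply m
      have hoff : ∀ k ∈ Finset.univ.erase k0,
          M k (c (j.succAbove (τ k))) = M k (j.succAbove (τ k)) := by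
        intro k hk
        have hkne : k ≠ k0 := (Finset.mem_erase.mp hk).1
        have h1 : j.succAbove (τ k) ≠ j := Fin.succAbove_ne j (τ k)
        have h2 : j.succAbove (τ k) ≠ j' := by
          rw [← hm]
          intro h
          exact hkne (by
            have := Fin.succAbove_right_injective (p := j) h
            rw [hk0, ← this, Equiv.symm_apply_apply])
        rw [hc, Equiv.swap_apply_of_ne_of_ne h1 h2]
      have hT : (0:ℝ) ≤ ∏ k ∈ Finset.univ.erase k0, M k (j.succAbove (τ k)) :=
        Finset.prod_nonneg fun k _ => (hpos _ _).le
      have e1 : ∏ k, M k (j.succAbove (τ k))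
          = M k0 (j.succAbove (τ k0)) * ∏ k ∈ Finset.univ.erase k0, M k (j.succAbove (τ k)) :=
        (Finset.mul_prod_erase _ _ (Finset.mem_univ k0)).symm
      have e2 : ∏ k, M k (c (j.succAbove (τ k)))
          = M k0 (c (j.succAbove (τ k0)))
              * ∏ k ∈ Finset.univ.erase k0, M k (j.succAbove (τ k)) := by
        rw [← (Finset.mul_prod_erase _ _ (Finset.mem_univ k0))]
        congr 1
        exact Finset.prod_congr rfl hoff
      have hv : j.succAbove (τ k0) = j' := by rw [hτk0, hm]
      have hcv : c (j.succAbove (τ k0)) = j := by rw [hv, hc, Equiv.swap_apply_right]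
      rw [e1, e2, hcv, hv]
      have h3 : M k0 j' ≤ lam := (hM k0 j').2
      have h4 : lam⁻¹ ≤ M k0 j := (hM k0 j).1
      have h5 : lam ≤ lam ^ 2 * M k0 j := by
        have := mul_le_mul_of_nonneg_left h4 (le_of_lt (by positivity : (0:ℝ) < lam ^ 2))
        calc lam = lam ^ 2 * lam⁻¹ := by field_simp
        _ ≤ lam ^ 2 * M k0 j := this
      calc M k0 j' * ∏ k ∈ Finset.univ.erase k0, M k (j.succAbove (τ k))
          ≤ (lam ^ 2 * M k0 j) * ∏ k ∈ Finset.univ.erase k0, M k (j.succAbove (τ k)) :=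
            mul_le_mul_of_nonneg_right (le_trans h3 h5) hT
        _ = lam ^ 2 * (M k0 j * ∏ k ∈ Finset.univ.erase k0, M k (j.succAbove (τ k))) := by ring
    have hrange : Set.range (fun k => c (j.succAbove k)) = Set.range j'.succAbove := by
      have : (fun k => c (j.succAbove k)) = c ∘ j.succAbove := rfl
      rw [this, Set.range_comp, Fin.range_succAbove, Fin.range_succAbove,
        Set.image_compl_eq c.bijective, Set.image_singleton, hc, Equiv.swap_apply_left]
    have hinj : Function.Injective (fun k => c (j.succAbove k)) :=
      c.injective.comp (Fin.succAbove_right_injective)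
    calc ∑ τ : Equiv.Perm (Fin N), ∏ k, M k (j.succAbove (τ k))
        ≤ ∑ τ : Equiv.Perm (Fin N), lam ^ 2 * ∏ k, M k (c (j.succAbove (τ k))) :=
          Finset.sum_le_sum fun τ _ => hstep τ
      _ = lam ^ 2 * ∑ τ : Equiv.Perm (Fin N), ∏ k, M k (c (j.succAbove (τ k))) := by
          rw [Finset.mul_sum]
      _ = lam ^ 2 * ∑ τ : Equiv.Perm (Fin N), ∏ k, M k (j'.succAbove (τ k)) := by
          rw [sum_prod_comp_eq M (fun k => c (j.succAbove k)) j'.succAbove hinj hrange]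

theorem stmt_12_aux {N : ℕ} (lam : ℝ) (hlam : 1 < lam)
    (A : Matrix (Fin (N + 1)) (Fin (N + 1)) ℝ)
    (hA : ∀ i j, lam⁻¹ ≤ A i j ∧ A i j ≤ lam)
    (i j : Fin (N + 1)) :
    lam⁻¹ ^ 5 * ((N + 1 : ℝ))⁻¹ * perm A ≤
        lam⁻¹ ^ 4 * (N + 1 : ℝ) * (∑ p, ∑ q, A p q)⁻¹ * perm A ∧
    lam⁻¹ ^ 4 * (N + 1 : ℝ) * (∑ p, ∑ q, A p q)⁻¹ * perm A ≤
        perm (A.submatrix i.succAbove j.succAbove) ∧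
    perm (A.submatrix i.succAbove j.succAbove) ≤
        lam ^ 4 * (N + 1 : ℝ) * (∑ p, ∑ q, A p q)⁻¹ * perm A ∧
    lam ^ 4 * (N + 1 : ℝ) * (∑ p, ∑ q, A p q)⁻¹ * perm A ≤
        lam ^ 5 * ((N + 1 : ℝ))⁻¹ * perm A := by
  have lam0 : (0:ℝ) < lam := lt_trans one_pos hlam
  have lamne : lam ≠ 0 := ne_of_gt lam0
  have hApos : ∀ p q, 0 < A p q := fun p q => lt_of_lt_of_le (inv_pos.mpr lam0) (hA p q).1
  have hNpos : (0:ℝ) < (N:ℝ) + 1 := by positivity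
  -- column comparison for minors
  have col : ∀ (a b b' : Fin (N+1)), perm (A.submatrix a.succAbove b.succAbove) ≤
      lam ^ 2 * perm (A.submatrix a.succAbove b'.succAbove) := by
    intro a b b'
    exact sumprod_col_le lam hlam (fun k r => A (a.succAbove k) r) (fun k q => hA _ _) b b'
  -- row comparison for minors, via transpose
  have row : ∀ (a a' b : Fin (N+1)), perm (A.submatrix a.succAbove b.succAbove) ≤
      lam ^ 2 * perm (A.submatrix a'.succAbove b.succAbove) := by
    intro a a' b
    have h1 : perm (A.submatrix a.succAbove b.succAbove)
        = perm (Aᵀ.submatrix b.succAbove a.succAbove) := by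
      rw [← perm_transpose (A.submatrix a.succAbove b.succAbove), Matrix.transpose_submatrix]
    have h2 : perm (A.submatrix a'.succAbove b.succAbove)
        = perm (Aᵀ.submatrix b.succAbove a'.succAbove) := by
      rw [← perm_transpose (A.submatrix a'.succAbove b.succAbove), Matrix.transpose_submatrix]
    rw [h1, h2]
    exact sumprod_col_le lam hlam (fun k r => Aᵀ (b.succAbove k) r) (fun k q => hA _ _) a a'
  have minor4 : ∀ (a b p q : Fin (N+1)), perm (A.submatrix a.succAbove b.succAbove) ≤
      lam ^ 4 * perm (A.submatrix p.succAbove q.succAbove) := by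
    intro a b p q
    calc perm (A.submatrix a.succAbove b.succAbove)
        ≤ lam ^ 2 * perm (A.submatrix a.succAbove q.succAbove) := col a b q
      _ ≤ lam ^ 2 * (lam ^ 2 * perm (A.submatrix p.succAbove q.succAbove)) :=
          mul_le_mul_of_nonneg_left (row a p q) (by positivity)
      _ = lam ^ 4 * perm (A.submatrix p.succAbove q.succAbove) := by ring
  set s : ℝ := ∑ p, ∑ q, A p q with hs
  set X : ℝ := perm (A.submatrix i.succAbove j.succAbove) with hX
  have hslb : ((N:ℝ)+1)^2 * lam⁻¹ ≤ s := by
    rw [hs]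
    have h1 : ∀ p : Fin (N+1), ((N:ℝ)+1) * lam⁻¹ ≤ ∑ q, A p q := by
      intro p
      calc ((N:ℝ)+1) * lam⁻¹ = ∑ _q : Fin (N+1), lam⁻¹ := by
            rw [Finset.sum_const, Finset.card_univ, Fintype.card_fin, nsmul_eq_mul]; push_cast; ring
        _ ≤ ∑ q, A p q := Finset.sum_le_sum fun q _ => (hA p q).1
    calc ((N:ℝ)+1)^2 * lam⁻¹ = ∑ _p : Fin (N+1), ((N:ℝ)+1) * lam⁻¹ := by
          rw [Finset.sum_const, Finset.card_univ, Fintype.card_fin, nsmul_eq_mul]; push_cast; ring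
      _ ≤ ∑ p, ∑ q, A p q := Finset.sum_le_sum fun p _ => h1 p
  have hsub : s ≤ ((N:ℝ)+1)^2 * lam := by
    rw [hs]
    have h1 : ∀ p : Fin (N+1), ∑ q, A p q ≤ ((N:ℝ)+1) * lam := by
      intro p
      calc ∑ q, A p q ≤ ∑ _q : Fin (N+1), lam := Finset.sum_le_sum fun q _ => (hA p q).2
        _ = ((N:ℝ)+1) * lam := by
            rw [Finset.sum_const, Finset.card_univ, Fintype.card_fin, nsmul_eq_mul]; push_cast; ring
    calc ∑ p, ∑ q, A p q ≤ ∑ _p : Fin (N+1), ((N:ℝ)+1) * lam :=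
          Finset.sum_le_sum fun p _ => h1 p
      _ = ((N:ℝ)+1)^2 * lam := by
          rw [Finset.sum_const, Finset.card_univ, Fintype.card_fin, nsmul_eq_mul]; push_cast; ring
  have spos : (0:ℝ) < s := lt_of_lt_of_le (by positivity) hslb
  have sne : s ≠ 0 := ne_of_gt spos
  have hpermA : (0:ℝ) ≤ perm A := by
    apply Finset.sum_nonneg
    intro σ _
    exact le_of_lt (Finset.prod_pos fun k _ => hApos _ _)
  have hcards : ∑ _p : Fin (N+1), perm A = ((N:ℝ)+1) * perm A := by
    rw [Finset.sum_const, Finset.card_univ, Fintype.card_fin, nsmul_eq_mul]; push_cast; ring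
  have keyupper : s * X ≤ lam ^ 4 * (((N:ℝ)+1) * perm A) := by
    calc s * X = ∑ p, ∑ q, A p q * X := by
          rw [hs, Finset.sum_mul]
          exact Finset.sum_congr rfl fun p _ => Finset.sum_mul _ _ _
      _ ≤ ∑ p, ∑ q, A p q * (lam ^ 4 * perm (A.submatrix p.succAbove q.succAbove)) :=
          Finset.sum_le_sum fun p _ => Finset.sum_le_sum fun q _ =>
            mul_le_mul_of_nonneg_left (minor4 i j p q) (hApos p q).le
      _ = lam ^ 4 * ∑ p : Fin (N+1), perm A := by
          rw [Finset.mul_sum]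
          refine Finset.sum_congr rfl fun p _ => ?_
          rw [perm_expand A p, Finset.mul_sum]
          exact Finset.sum_congr rfl fun q _ => by ring
      _ = lam ^ 4 * (((N:ℝ)+1) * perm A) := by rw [hcards]
  have keylower : ((N:ℝ)+1) * perm A ≤ lam ^ 4 * (s * X) := by
    calc ((N:ℝ)+1) * perm A = ∑ _p : Fin (N+1), perm A := hcards.symm
      _ = ∑ p, ∑ q, A p q * perm (A.submatrix p.succAbove q.succAbove) :=
          Finset.sum_congr rfl fun p _ => perm_expand A p
      _ ≤ ∑ p, ∑ q, A p q * (lam ^ 4 * X) :=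
          Finset.sum_le_sum fun p _ => Finset.sum_le_sum fun q _ =>
            mul_le_mul_of_nonneg_left (minor4 p q i j) (hApos p q).le
      _ = (∑ p, ∑ q, A p q) * (lam ^ 4 * X) := by
          rw [Finset.sum_mul]
          exact Finset.sum_congr rfl fun p _ => (Finset.sum_mul _ _ _).symm
      _ = lam ^ 4 * (s * X) := by rw [← hs]; ring
  refine ⟨?_, ?_, ?_, ?_⟩
  · -- goal 1
    refine mul_le_mul_of_nonneg_right ?_ hpermA
    have h : (((N:ℝ)+1)^2 * lam)⁻¹ ≤ s⁻¹ := inv_anti₀ spos hsub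
    calc lam⁻¹ ^ 5 * ((N:ℝ) + 1)⁻¹ = lam⁻¹ ^ 4 * ((N:ℝ) + 1) * (((N:ℝ)+1)^2 * lam)⁻¹ := by
          field_simp
      _ ≤ lam⁻¹ ^ 4 * ((N:ℝ) + 1) * s⁻¹ := mul_le_mul_of_nonneg_left h (by positivity)
  · -- goal 2
    rw [show lam⁻¹ ^ 4 * ((N:ℝ) + 1) * s⁻¹ * perm A
        = (((N:ℝ)+1) * perm A) / (lam ^ 4 * s) by field_simp]
    rw [div_le_iff₀ (by positivity)]
    nlinarith [keylower]
  · -- goal 3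
    rw [show lam ^ 4 * ((N:ℝ) + 1) * s⁻¹ * perm A
        = (lam ^ 4 * (((N:ℝ)+1) * perm A)) / s by field_simp]
    rw [le_div_iff₀ spos]
    nlinarith [keyupper]
  · -- goal 4
    refine mul_le_mul_of_nonneg_right ?_ hpermA
    have h : s⁻¹ ≤ (((N:ℝ)+1)^2 * lam⁻¹)⁻¹ := inv_anti₀ (by positivity) hslb
    calc lam ^ 4 * ((N:ℝ) + 1) * s⁻¹
        ≤ lam ^ 4 * ((N:ℝ) + 1) * (((N:ℝ)+1)^2 * lam⁻¹)⁻¹ :=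
          mul_le_mul_of_nonneg_left h (by positivity)
      _ = lam ^ 5 * ((N:ℝ) + 1)⁻¹ := by field_simp

/-- Bounds for the permanents of the minors of a `λ`-bounded matrix:
if every entry of the `n × n` matrix `A` (here `n = N + 1 ≥ 1`) lies in `[λ⁻¹, λ]` and
`s` is the sum of the entries of `A`, then
`λ⁻⁵·n⁻¹·per A ≤ λ⁻⁴·n·s⁻¹·per A ≤ per A(i|j) ≤ λ⁴·n·s⁻¹·per A ≤ λ⁵·n⁻¹·per A`. -/
theorem stmt_12 {N : ℕ} (lam : ℝ) (hlam : 1 < lam)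
    (A : Matrix (Fin (N + 1)) (Fin (N + 1)) ℝ)
    (hA : ∀ i j, lam⁻¹ ≤ A i j ∧ A i j ≤ lam)
    (i j : Fin (N + 1)) :
    lam⁻¹ ^ 5 * ((N + 1 : ℝ))⁻¹ * perm A ≤
        lam⁻¹ ^ 4 * (N + 1 : ℝ) * (∑ p, ∑ q, A p q)⁻¹ * perm A ∧
    lam⁻¹ ^ 4 * (N + 1 : ℝ) * (∑ p, ∑ q, A p q)⁻¹ * perm A ≤
        perm (A.submatrix i.succAbove j.succAbove) ∧
    perm (A.submatrix i.succAbove j.succAbove) ≤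
        lam ^ 4 * (N + 1 : ℝ) * (∑ p, ∑ q, A p q)⁻¹ * perm A ∧
    lam ^ 4 * (N + 1 : ℝ) * (∑ p, ∑ q, A p q)⁻¹ * perm A ≤
        lam ^ 5 * ((N + 1 : ℝ))⁻¹ * perm A := by
  exact stmt_12_aux lam hlam A hA i j
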